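/- arXiv:1511.06020 — 2 statements merged into one kernel-verified Lean document; each statement's English description precedes it below -/
import Mathlib

section
/- Let {A_n} be a VMV sequence of n×n complex matrices of fixed band size k₀ that is μ-distributed on a compact set X ⊆ ℂ^{2k₀+1}. Then for any natural numbers r and s, lim_{n→∞} (1/n) Tr[A_n^r (A_n*)^s] = (1/(2π)) ∫_{−π}^{π} ∫_X P(z,t)^r · conj(P(z,t))^s dμ(z) dt, where A_n* is the conjugate transpose of A_n. -/
open Filter Asymptotics Matrix MeasureTheory Topology

/-- The `j`-th entry of the `k`-th diagonal of an `n × n` complex matrix: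
`a_{k;j} = A_{j, j+k}` for `k ≥ 0` and `a_{k;j} = A_{j+|k|, j}` for `k < 0`,
with the convention that out-of-range entries are `0`. -/
def diagEntry {n : ℕ} (A : Matrix (Fin n) (Fin n) ℂ) (k j : ℤ) : ℂ :=
  if hk : 0 ≤ k then
    if hj : 0 ≤ j ∧ j + k < (n : ℤ) then
      A ⟨j.toNat, by omega⟩ ⟨(j + k).toNat, by omega⟩
    else 0
  else
    if hj : 0 ≤ j ∧ j - k < (n : ℤ) then
      A ⟨(j - k).toNat, by omega⟩ ⟨j.toNat, by omega⟩
    else 0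

/-- A sequence of `n × n` matrices has vanishing mean variation if along each diagonal `k`,
`∑_{j=0}^{n-|k|-2} |a_{k;j+1}(n) - a_{k;j}(n)| = o(n)` as `n → ∞`. -/
def VMV (A : ∀ n : ℕ, Matrix (Fin n) (Fin n) ℂ) : Prop :=
  ∀ k : ℤ, (fun n : ℕ => ∑ j ∈ Finset.range (n - k.natAbs - 1),
      ‖diagEntry (A n) k ((j : ℤ) + 1) - diagEntry (A n) k (j : ℤ)‖)
    =o[atTop] (fun n : ℕ => (n : ℝ))

/-- The vector `a_j(n) = (a_{-k₀;j}, …, a_{k₀;j}) ∈ ℂ^{2k₀+1}` of `j`-th entries of the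
diagonals of a band matrix, indexed by `Fin (2k₀+1)` with `i` corresponding to `k = i - k₀`. -/
def diagVec {n : ℕ} (k₀ : ℕ) (A : Matrix (Fin n) (Fin n) ℂ) (j : ℕ) :
    Fin (2 * k₀ + 1) → ℂ :=
  fun i => diagEntry A ((i : ℤ) - (k₀ : ℤ)) (j : ℤ)

/-- The trigonometric polynomial `P(z,t) = ∑_{|k| ≤ k₀} z_k e^{ikt}`. -/
noncomputable def bandP (k₀ : ℕ) (z : Fin (2 * k₀ + 1) → ℂ) (t : ℝ) : ℂ :=
  ∑ i : Fin (2 * k₀ + 1), z i * Complex.exp (Complex.I * (((i : ℤ) - (k₀ : ℤ) : ℤ) : ℂ) * (t : ℂ))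

noncomputable def Ent {n : ℕ} (M : Matrix (Fin n) (Fin n) ℂ) (p q : ℤ) : ℂ :=
  if h : 0 ≤ p ∧ p < (n:ℤ) ∧ 0 ≤ q ∧ q < (n:ℤ) then M ⟨p.toNat, by omega⟩ ⟨q.toNat, by omega⟩ else 0

lemma Ent_eq_diagEntry {n : ℕ} (M : Matrix (Fin n) (Fin n) ℂ) (p q : ℤ) :
    Ent M p q = diagEntry M (q - p) (min p q) := by
  unfold Ent diagEntry
  rcases le_total p q with h | h
  · rw [min_eq_left h]
    have h0 : (0:ℤ) ≤ q - p := by omega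
    rw [dif_pos h0]
    split_ifs with h1 h2 h2 <;>
      first
        | rfl
        | (congr 1 <;> exact Fin.ext (by simp only [Fin.val_mk]; omega))
        | (exfalso; omega)
  · rw [min_eq_right h]
    by_cases h0 : (0:ℤ) ≤ q - p
    · have he : p = q := by omega
      subst he
      rw [dif_pos h0]
      split_ifs with h1 h2 h2 <;>
        first
          | rfl
          | (congr 1 <;> exact Fin.ext (by simp only [Fin.val_mk]; omega))
          | (exfalso; omega)
    · rw [dif_neg h0]
      split_ifs with h1 h2 h2 <;>
        first
          | rfl
          | (congr 1 <;> exact Fin.ext (by simp only [Fin.val_mk]; omega))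
          | (exfalso; omega)

lemma diagEntry_zero_of_out {n : ℕ} (M : Matrix (Fin n) (Fin n) ℂ) (k j : ℤ)
    (h : j < 0 ∨ (n:ℤ) ≤ j + |k|) : diagEntry M k j = 0 := by
  unfold diagEntry
  split_ifs with h1 h2 h2 <;>
    first | rfl | (exfalso; rcases abs_cases k with ⟨h3,h4⟩|⟨h3,h4⟩ <;> omega)

lemma Ent_conjTranspose {n : ℕ} (M : Matrix (Fin n) (Fin n) ℂ) (p q : ℤ) :
    Ent Mᴴ p q = (starRingEnd ℂ) (Ent M q p) := by
  unfold Ent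
  split_ifs with h1 h2 h2 <;> first | (exfalso; omega) | simp [Matrix.conjTranspose_apply]

lemma trace_eq_sum_Ent {n : ℕ} (M : Matrix (Fin n) (Fin n) ℂ) :
    Matrix.trace M = ∑ j ∈ Finset.range n, Ent M (j:ℤ) (j:ℤ) := by
  rw [Matrix.trace, ← Fin.sum_univ_eq_sum_range (fun j => Ent M (j:ℤ) (j:ℤ))]
  refine Finset.sum_congr rfl fun i _ => ?_
  unfold Ent
  have hi : ((i:ℕ):ℤ) < (n:ℤ) := by exact_mod_cast i.2
  have h : 0 ≤ ((i:ℕ):ℤ) ∧ ((i:ℕ):ℤ) < (n:ℤ) ∧ 0 ≤ ((i:ℕ):ℤ) ∧ ((i:ℕ):ℤ) < (n:ℤ) := by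
    exact ⟨by positivity, hi, by positivity, hi⟩
  rw [dif_pos h, Matrix.diag_apply]
  congr 1 <;> exact Fin.ext (by simp only [Fin.val_mk]; omega)

def idx (k₀ : ℕ) (k : ℤ) : Fin (2*k₀+1) := ⟨(k + k₀).toNat % (2*k₀+1), Nat.mod_lt _ (by omega)⟩

lemma idx_coe (k₀ : ℕ) (k : ℤ) (hk : |k| ≤ (k₀:ℤ)) : ((idx k₀ k : ℕ) : ℤ) = k + k₀ := by
  have h1 : 0 ≤ k + k₀ := by rcases abs_cases k with ⟨h3,h4⟩|⟨h3,h4⟩ <;> omega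
  have h2 : (k + k₀).toNat < 2*k₀+1 := by rcases abs_cases k with ⟨h3,h4⟩|⟨h3,h4⟩ <;> omega
  simp only [idx, Nat.mod_eq_of_lt h2]
  omega

lemma diagVec_idx {n : ℕ} (k₀ : ℕ) (A : Matrix (Fin n) (Fin n) ℂ) (j : ℕ) (k : ℤ)
    (hk : |k| ≤ (k₀:ℤ)) : diagVec k₀ A j (idx k₀ k) = diagEntry A k (j:ℤ) := by
  unfold diagVec
  rw [idx_coe k₀ k hk]
  congr 1
  omega

lemma Ent_zero_of_out {n : ℕ} (M : Matrix (Fin n) (Fin n) ℂ) (p q : ℤ)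
    (h : ¬ (0 ≤ p ∧ p < (n:ℤ) ∧ 0 ≤ q ∧ q < (n:ℤ))) : Ent M p q = 0 := by
  unfold Ent; rw [dif_neg h]

lemma Ent_pos {n : ℕ} (M : Matrix (Fin n) (Fin n) ℂ) (p q : ℤ)
    (h : 0 ≤ p ∧ p < (n:ℤ) ∧ 0 ≤ q ∧ q < (n:ℤ)) :
    Ent M p q = M ⟨p.toNat, by omega⟩ ⟨q.toNat, by omega⟩ := by
  unfold Ent; rw [dif_pos h]

lemma sum_range_int_cast {M : Type*} [AddCommMonoid M] (f : ℤ → M) (n : ℕ) :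
    ∑ j ∈ Finset.range n, f (j:ℤ) = ∑ u ∈ Finset.Icc (0:ℤ) ((n:ℤ)-1), f u := by
  refine Finset.sum_bij' (fun j _ => (j:ℤ)) (fun u _ => u.toNat) ?_ ?_ ?_ ?_ ?_
  · intro a ha; simp only [Finset.mem_range] at ha; simp only [Finset.mem_Icc]; omega
  · intro a ha; simp only [Finset.mem_Icc] at ha; simp only [Finset.mem_range]; omega
  · intro a ha; omega
  · intro a ha; simp only [Finset.mem_Icc] at ha; omega
  · intro a ha; rfl

lemma sum_shift_int {M : Type*} [AddCommMonoid M] (f : ℤ → M) (c : ℤ) (n : ℕ) :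
    ∑ j ∈ Finset.range n, f ((j:ℤ) + c) = ∑ u ∈ Finset.Icc c ((n:ℤ) + c - 1), f u := by
  refine Finset.sum_bij' (fun j _ => (j:ℤ) + c) (fun u _ => (u - c).toNat) ?_ ?_ ?_ ?_ ?_
  · intro a ha; simp only [Finset.mem_range] at ha; simp only [Finset.mem_Icc]; omega
  · intro a ha; simp only [Finset.mem_Icc] at ha; simp only [Finset.mem_range]; omega
  · intro a ha; omega
  · intro a ha; simp only [Finset.mem_Icc] at ha; omega
  · intro a ha; rfl

lemma Ent_mul {n : ℕ} (M B : Matrix (Fin n) (Fin n) ℂ) (b : ℕ)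
    (hB : ∀ p q : ℤ, (b:ℤ) < |q - p| → Ent B p q = 0) (p q : ℤ) :
    Ent (M * B) p q = ∑ k ∈ Finset.Icc (-(b:ℤ)) (b:ℤ), Ent M p (q - k) * Ent B (q - k) q := by
  have hRHS : ∑ k ∈ Finset.Icc (-(b:ℤ)) (b:ℤ), Ent M p (q - k) * Ent B (q - k) q
      = ∑ u ∈ Finset.Icc (q - b) (q + b), Ent M p u * Ent B u q := by
    refine Finset.sum_bij' (fun k _ => q - k) (fun u _ => q - u) ?_ ?_ ?_ ?_ ?_
    · intro a ha; simp only [Finset.mem_Icc] at ha; simp only [Finset.mem_Icc]; omega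
    · intro a ha; simp only [Finset.mem_Icc] at ha; simp only [Finset.mem_Icc]; omega
    · intro a ha; omega
    · intro a ha; omega
    · intro a ha; rfl
  by_cases hpq : 0 ≤ p ∧ p < (n:ℤ) ∧ 0 ≤ q ∧ q < (n:ℤ)
  · have hLHS : Ent (M * B) p q = ∑ u ∈ Finset.Icc (0:ℤ) ((n:ℤ)-1), Ent M p u * Ent B u q := by
      rw [Ent_pos (M * B) p q hpq, Matrix.mul_apply,
        ← sum_range_int_cast (fun u => Ent M p u * Ent B u q) n,
        ← Fin.sum_univ_eq_sum_range (fun j => Ent M p (j:ℤ) * Ent B (j:ℤ) q)]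
      refine Finset.sum_congr rfl fun u _ => ?_
      have hu : 0 ≤ ((u:ℕ):ℤ) ∧ ((u:ℕ):ℤ) < (n:ℤ) := ⟨by positivity, by exact_mod_cast u.2⟩
      rw [Ent_pos M p u ⟨hpq.1, hpq.2.1, hu⟩, Ent_pos B u q ⟨hu.1, hu.2, hpq.2.2⟩]
      congr 2 <;> exact Fin.ext (by simp only [Fin.val_mk]; omega)
    rw [hLHS, hRHS]
    rw [← Finset.sum_subset (Finset.inter_subset_left
        (s₁ := Finset.Icc (0:ℤ) ((n:ℤ)-1)) (s₂ := Finset.Icc (q - b) (q + b))),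
      ← Finset.sum_subset (Finset.inter_subset_right
        (s₁ := Finset.Icc (0:ℤ) ((n:ℤ)-1)) (s₂ := Finset.Icc (q - b) (q + b)))]
    · intro u hu hnu
      simp only [Finset.mem_Icc] at hu
      have h0 : Ent M p u = 0 := by
        refine Ent_zero_of_out _ _ _ fun hc => ?_
        exact hnu (Finset.mem_inter.mpr ⟨Finset.mem_Icc.mpr (by omega), Finset.mem_Icc.mpr (by omega)⟩)
      rw [h0, zero_mul]
    · intro u hu hnu
      simp only [Finset.mem_Icc] at hu
      have h1 : (b:ℤ) < |q - u| := by
        by_contra hc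
        push_neg at hc
        rcases abs_cases (q - u) with ⟨h3,h4⟩|⟨h3,h4⟩ <;>
          exact hnu (Finset.mem_inter.mpr ⟨Finset.mem_Icc.mpr (by omega), Finset.mem_Icc.mpr (by omega)⟩)
      rw [hB _ _ h1, mul_zero]
  · rw [Ent_zero_of_out _ _ _ hpq, hRHS]
    refine (Finset.sum_eq_zero fun u hu => ?_).symm
    by_cases hq : 0 ≤ q ∧ q < (n:ℤ)
    · rw [Ent_zero_of_out M p u (by tauto), zero_mul]
    · rw [Ent_zero_of_out B u q (by tauto), mul_zero]

lemma sum_insert_le' {g : ℤ → ℝ} (hg : ∀ t, 0 ≤ g t) (a : ℤ) (s : Finset ℤ) :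
    ∑ t ∈ insert a s, g t ≤ g a + ∑ t ∈ s, g t := by
  by_cases h : a ∈ s
  · rw [Finset.insert_eq_self.mpr h]
    exact le_add_of_nonneg_left (hg a)
  · rw [Finset.sum_insert h]

lemma isLittleO_of_le_nat {f g : ℕ → ℝ} (h0 : ∀ n, 0 ≤ f n) (h : ∀ n, f n ≤ g n)
    (hg : g =o[atTop] (fun n : ℕ => (n:ℝ))) : f =o[atTop] (fun n : ℕ => (n:ℝ)) := by
  refine (IsBigO.of_bound 1 (Eventually.of_forall fun n => ?_)).trans_isLittleO hg
  rw [one_mul, Real.norm_eq_abs, Real.norm_eq_abs, abs_of_nonneg (h0 n)]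
  exact (h n).trans (le_abs_self _)

lemma const_isLittleO_nat (c : ℝ) :
    (fun _ : ℕ => c) =o[atTop] (fun n : ℕ => (n:ℝ)) :=
  Asymptotics.isLittleO_const_left.2 <| Or.inr <|
    tendsto_abs_atTop_atTop.comp tendsto_natCast_atTop_atTop

/-- single-step variation bound over an arbitrary finite set of integer positions -/
lemma single_step_bound {n : ℕ} (A : Matrix (Fin n) (Fin n) ℂ) (k : ℤ) (C : ℝ)
    (hC : ∀ j : ℤ, ‖diagEntry A k j‖ ≤ C) (S : Finset ℤ) :
    ∑ t ∈ S, ‖diagEntry A k (t+1) - diagEntry A k t‖ ≤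
      (∑ j ∈ Finset.range (n - k.natAbs - 1),
        ‖diagEntry A k ((j:ℤ)+1) - diagEntry A k (j:ℤ)‖) + 4*C := by
  set D : ℤ → ℂ := fun t => diagEntry A k t with hD
  set g : ℤ → ℝ := fun t => ‖D (t+1) - D t‖ with hgdef
  have hg0 : ∀ t, 0 ≤ g t := fun t => norm_nonneg _
  have hgC : ∀ t, g t ≤ 2*C := fun t => by
    calc g t ≤ ‖D (t+1)‖ + ‖D t‖ := norm_sub_le _ _
    _ ≤ C + C := add_le_add (hC _) (hC _)
    _ = 2*C := by ring
  have hC0 : 0 ≤ C := le_trans (norm_nonneg _) (hC 0)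
  set m : ℤ := (n:ℤ) - k.natAbs with hm
  have hDzero : ∀ t : ℤ, t < 0 ∨ m ≤ t → D t = 0 := by
    intro t ht
    refine diagEntry_zero_of_out A k t ?_
    rcases ht with ht | ht
    · exact Or.inl ht
    · right; rcases abs_cases k with ⟨h3,h4⟩|⟨h3,h4⟩ <;> omega
  have hsupp : ∀ t : ℤ, t < -1 ∨ m ≤ t → g t = 0 := by
    intro t ht
    have h1 : D (t+1) = 0 := hDzero _ (by omega)
    have h2 : D t = 0 := hDzero _ (by omega)
    simp [hgdef, h1, h2]
  have step1 : ∑ t ∈ S, g t ≤ ∑ t ∈ insert (-1 : ℤ) (insert (m-1) (Finset.Icc (0:ℤ) (m-2))), g t := by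
    rw [← Finset.sum_inter_add_sum_sdiff S (insert (-1 : ℤ) (insert (m-1) (Finset.Icc (0:ℤ) (m-2))))]
    have h2 : ∑ t ∈ S \ (insert (-1 : ℤ) (insert (m-1) (Finset.Icc (0:ℤ) (m-2)))), g t = 0 :=
      Finset.sum_eq_zero fun t ht => by
      simp only [Finset.mem_sdiff, Finset.mem_insert, Finset.mem_Icc] at ht
      refine hsupp t ?_
      rcases ht with ⟨-, ht2⟩
      push_neg at ht2
      omega
    rw [h2, add_zero]
    exact Finset.sum_le_sum_of_subset_of_nonneg (Finset.inter_subset_right) fun t _ _ => hg0 t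
  have step2 : ∑ t ∈ insert (-1 : ℤ) (insert (m-1) (Finset.Icc (0:ℤ) (m-2))), g t
      ≤ g (-1) + (g (m-1) + ∑ t ∈ Finset.Icc (0:ℤ) (m-2), g t) :=
    le_trans (sum_insert_le' hg0 _ _) (by gcongr; exact sum_insert_le' hg0 _ _)
  have step3 : ∑ t ∈ Finset.Icc (0:ℤ) (m-2), g t
      ≤ ∑ j ∈ Finset.range (n - k.natAbs - 1), g (j:ℤ) := by
    by_cases hn : n ≥ k.natAbs + 1
    · have : ((n - k.natAbs - 1 : ℕ) : ℤ) - 1 = m - 2 := by omega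
      rw [sum_range_int_cast g (n - k.natAbs - 1), this]
    · have : Finset.Icc (0:ℤ) (m-2) = ∅ := by
        rw [Finset.Icc_eq_empty_iff]; omega
      rw [this, Finset.sum_empty]
      exact Finset.sum_nonneg fun j _ => hg0 _
  calc ∑ t ∈ S, g t ≤ g (-1) + (g (m-1) + ∑ t ∈ Finset.Icc (0:ℤ) (m-2), g t) :=
        le_trans step1 step2
    _ ≤ 2*C + (2*C + ∑ j ∈ Finset.range (n - k.natAbs - 1), g (j:ℤ)) := by
        gcongr
        · exact hgC _
        · exact hgC _
    _ = (∑ j ∈ Finset.range (n - k.natAbs - 1), ‖D ((j:ℤ)+1) - D (j:ℤ)‖) + 4*C := by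
        simp only [hgdef]; ring

lemma shift_sum_bound {n : ℕ} (A : Matrix (Fin n) (Fin n) ℂ) (k c : ℤ) (C : ℝ)
    (hC : ∀ j : ℤ, ‖diagEntry A k j‖ ≤ C) :
    ∑ j ∈ Finset.range n, ‖diagEntry A k ((j:ℤ) + c) - diagEntry A k (j:ℤ)‖ ≤
      (c.natAbs : ℝ) * ((∑ j ∈ Finset.range (n - k.natAbs - 1),
        ‖diagEntry A k ((j:ℤ)+1) - diagEntry A k (j:ℤ)‖) + 4*C) := by
  set D : ℤ → ℂ := fun t => diagEntry A k t with hD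
  have key : ∀ j : ℕ, ‖D ((j:ℤ) + c) - D (j:ℤ)‖ ≤
      ∑ m ∈ Finset.range c.natAbs, ‖D ((j:ℤ) + min c 0 + (m:ℤ) + 1) - D ((j:ℤ) + min c 0 + (m:ℤ))‖ := by
    intro j
    have tele := Finset.sum_range_sub (fun m : ℕ => D ((j:ℤ) + min c 0 + (m:ℤ))) c.natAbs
    have tele' : ∑ m ∈ Finset.range c.natAbs,
        (D ((j:ℤ) + min c 0 + (m:ℤ) + 1) - D ((j:ℤ) + min c 0 + (m:ℤ)))
        = D ((j:ℤ) + min c 0 + (c.natAbs : ℤ)) - D ((j:ℤ) + min c 0) := by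
      push_cast at tele
      convert tele using 2 <;> push_cast <;> ring_nf
    have hnorm : ‖D ((j:ℤ) + c) - D (j:ℤ)‖
        = ‖D ((j:ℤ) + min c 0 + (c.natAbs : ℤ)) - D ((j:ℤ) + min c 0)‖ := by
      rcases le_or_gt 0 c with hc | hc
      · have e1 : (j:ℤ) + min c 0 + (c.natAbs:ℤ) = (j:ℤ) + c := by omega
        have e2 : (j:ℤ) + min c 0 = (j:ℤ) := by omega
        rw [e1, e2]
      · have e1 : (j:ℤ) + min c 0 + (c.natAbs:ℤ) = (j:ℤ) := by omega
        have e2 : (j:ℤ) + min c 0 = (j:ℤ) + c := by omega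
        rw [e1, e2, norm_sub_rev]
    rw [hnorm, ← tele']
    exact le_trans (norm_sum_le _ _) le_rfl
  calc ∑ j ∈ Finset.range n, ‖D ((j:ℤ) + c) - D (j:ℤ)‖
      ≤ ∑ j ∈ Finset.range n, ∑ m ∈ Finset.range c.natAbs,
          ‖D ((j:ℤ) + min c 0 + (m:ℤ) + 1) - D ((j:ℤ) + min c 0 + (m:ℤ))‖ :=
        Finset.sum_le_sum fun j _ => key j
    _ = ∑ m ∈ Finset.range c.natAbs, ∑ j ∈ Finset.range n,
          ‖D ((j:ℤ) + (min c 0 + (m:ℤ)) + 1) - D ((j:ℤ) + (min c 0 + (m:ℤ)))‖ := by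
        rw [Finset.sum_comm]
        refine Finset.sum_congr rfl fun m _ => Finset.sum_congr rfl fun j _ => by ring_nf
    _ ≤ ∑ m ∈ Finset.range c.natAbs, ((∑ j ∈ Finset.range (n - k.natAbs - 1),
          ‖D ((j:ℤ)+1) - D (j:ℤ)‖) + 4*C) := by
        refine Finset.sum_le_sum fun m _ => ?_
        rw [sum_shift_int (fun u => ‖D (u + 1) - D u‖) (min c 0 + (m:ℤ)) n]
        exact single_step_bound A k C hC _
    _ = (c.natAbs : ℝ) * ((∑ j ∈ Finset.range (n - k.natAbs - 1),
          ‖D ((j:ℤ)+1) - D (j:ℤ)‖) + 4*C) := by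
        rw [Finset.sum_const, Finset.card_range, nsmul_eq_mul]

lemma shift_littleO (A : ∀ n : ℕ, Matrix (Fin n) (Fin n) ℂ) (hVMV : VMV A) (C : ℝ)
    (hC : ∀ n : ℕ, ∀ k j : ℤ, ‖diagEntry (A n) k j‖ ≤ C) (k c : ℤ) :
    (fun n : ℕ => ∑ j ∈ Finset.range n,
        ‖diagEntry (A n) k ((j:ℤ) + c) - diagEntry (A n) k (j:ℤ)‖)
      =o[atTop] (fun n : ℕ => (n : ℝ)) := by
  refine isLittleO_of_le_nat (fun n => Finset.sum_nonneg fun j _ => norm_nonneg _)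
    (fun n => shift_sum_bound (A n) k c C (fun j => hC n k j)) ?_
  exact ((hVMV k).add (const_isLittleO_nat (4*C))).const_mul_left _

noncomputable def stepFun (k₀ : ℕ) (φ ψ : ℤ → (Fin (2*k₀+1) → ℂ) → ℂ) :
    ℤ → (Fin (2*k₀+1) → ℂ) → ℂ :=
  fun d z => ∑ k ∈ Finset.Icc (-(k₀:ℤ)) (k₀:ℤ), ψ (d - k) z * φ k z

noncomputable def phiA (k₀ : ℕ) : ℤ → (Fin (2*k₀+1) → ℂ) → ℂ := fun k z => z (idx k₀ k)

noncomputable def phiB (k₀ : ℕ) : ℤ → (Fin (2*k₀+1) → ℂ) → ℂ :=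
  fun k z => (starRingEnd ℂ) (z (idx k₀ (-k)))

noncomputable def psi (k₀ : ℕ) : ℕ → ℕ → ℤ → (Fin (2*k₀+1) → ℂ) → ℂ
  | r, s+1 => stepFun k₀ (phiB k₀) (psi k₀ r s)
  | r+1, 0 => stepFun k₀ (phiA k₀) (psi k₀ r 0)
  | 0, 0 => fun d _ => if d = 0 then 1 else 0

lemma psi_succ_s (k₀ r s) : psi k₀ r (s+1) = stepFun k₀ (phiB k₀) (psi k₀ r s) := by
  rw [psi]

lemma psi_succ_r (k₀ r) : psi k₀ (r+1) 0 = stepFun k₀ (phiA k₀) (psi k₀ r 0) := by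
  rw [psi]

lemma psi_zero (k₀) : psi k₀ 0 0 = fun d _ => if d = 0 then 1 else 0 := by
  rw [psi]

lemma stepFun_continuous (k₀ : ℕ) (φ ψ : ℤ → (Fin (2*k₀+1) → ℂ) → ℂ)
    (hφ : ∀ k, Continuous (φ k)) (hψ : ∀ d, Continuous (ψ d)) (d : ℤ) :
    Continuous (stepFun k₀ φ ψ d) :=
  continuous_finset_sum _ fun k _ => (hψ _).mul (hφ _)

lemma phiA_continuous (k₀ : ℕ) (k : ℤ) : Continuous (phiA k₀ k) := continuous_apply _

lemma phiB_continuous (k₀ : ℕ) (k : ℤ) : Continuous (phiB k₀ k) :=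
  Complex.continuous_conj.comp (continuous_apply _)

lemma psi_continuous (k₀ r s : ℕ) : ∀ d, Continuous (psi k₀ r s d) := by
  induction s with
  | zero =>
    induction r with
    | zero => intro d; rw [psi_zero]; exact continuous_const
    | succ r ih =>
      intro d; rw [psi_succ_r]
      exact stepFun_continuous _ _ _ (phiA_continuous k₀) ih d
  | succ s ih =>
    intro d; rw [psi_succ_s]
    exact stepFun_continuous _ _ _ (phiB_continuous k₀) ih d

lemma step_littleO (k₀ : ℕ) (A : ∀ n : ℕ, Matrix (Fin n) (Fin n) ℂ)
    (X : Set (Fin (2*k₀+1) → ℂ)) (hX : IsCompact X)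
    (hmem : ∀ n : ℕ, ∀ j : ℕ, j < n → diagVec k₀ (A n) j ∈ X)
    (C : ℝ)
    (B : ∀ n : ℕ, Matrix (Fin n) (Fin n) ℂ)
    (φ : ℤ → (Fin (2*k₀+1) → ℂ) → ℂ)
    (hBband : ∀ n : ℕ, ∀ p q : ℤ, (k₀:ℤ) < |q - p| → Ent (B n) p q = 0)
    (hBC : ∀ n : ℕ, ∀ p q : ℤ, ‖Ent (B n) p q‖ ≤ C)
    (hBapprox : ∀ k c : ℤ, |k| ≤ (k₀:ℤ) →
      (fun n : ℕ => ∑ j ∈ Finset.range n,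
        ‖Ent (B n) ((j:ℤ)+c) (((j:ℤ)+c)+k) - φ k (diagVec k₀ (A n) j)‖)
        =o[atTop] (fun n : ℕ => (n:ℝ)))
    (M : ∀ n : ℕ, Matrix (Fin n) (Fin n) ℂ)
    (ψ : ℤ → (Fin (2*k₀+1) → ℂ) → ℂ)
    (hψc : ∀ d, Continuous (ψ d))
    (hM : ∀ d : ℤ, (fun n : ℕ => ∑ j ∈ Finset.range n,
        ‖Ent (M n) (j:ℤ) ((j:ℤ)+d) - ψ d (diagVec k₀ (A n) j)‖) =o[atTop] (fun n : ℕ => (n:ℝ)))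
    (d : ℤ) :
    (fun n : ℕ => ∑ j ∈ Finset.range n,
        ‖Ent ((M n) * (B n)) (j:ℤ) ((j:ℤ)+d) - stepFun k₀ φ ψ d (diagVec k₀ (A n) j)‖)
      =o[atTop] (fun n : ℕ => (n:ℝ)) := by
  have hC0 : 0 ≤ C := le_trans (norm_nonneg _) (hBC 0 0 0)
  -- bounds for ψ on X
  have hCk : ∀ k : ℤ, ∃ Ck : ℝ, 0 ≤ Ck ∧ ∀ z ∈ X, ‖ψ (d - k) z‖ ≤ Ck := by
    intro k
    obtain ⟨c0, hc0⟩ := hX.exists_bound_of_continuousOn (hψc (d - k)).continuousOn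
    exact ⟨max c0 0, le_max_right _ _, fun z hz => le_trans (hc0 z hz) (le_max_left _ _)⟩
  choose Cψ hCψ0 hCψ using hCk
  -- the dominating function
  set G : ℕ → ℝ := fun n => ∑ k ∈ Finset.Icc (-(k₀:ℤ)) (k₀:ℤ),
      (C * (∑ j ∈ Finset.range n, ‖Ent (M n) (j:ℤ) ((j:ℤ)+(d-k)) - ψ (d-k) (diagVec k₀ (A n) j)‖)
       + Cψ k * (∑ j ∈ Finset.range n,
          ‖Ent (B n) ((j:ℤ)+(d-k)) (((j:ℤ)+(d-k))+k) - φ k (diagVec k₀ (A n) j)‖)) with hG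
  have hGo : G =o[atTop] (fun n : ℕ => (n:ℝ)) := by
    rw [hG]
    refine IsLittleO.fun_sum fun k hk => ?_
    simp only [Finset.mem_Icc] at hk
    refine IsLittleO.add ((hM (d-k)).const_mul_left C) ?_
    exact (hBapprox k (d-k) (by rw [abs_le]; omega)).const_mul_left (Cψ k)
  refine isLittleO_of_le_nat (fun n => Finset.sum_nonneg fun j _ => norm_nonneg _)
    (fun n => ?_) hGo
  -- pointwise bound
  have hbound : ∀ j ∈ Finset.range n,
      ‖Ent ((M n) * (B n)) (j:ℤ) ((j:ℤ)+d) - stepFun k₀ φ ψ d (diagVec k₀ (A n) j)‖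
      ≤ ∑ k ∈ Finset.Icc (-(k₀:ℤ)) (k₀:ℤ),
        (‖Ent (M n) (j:ℤ) ((j:ℤ)+(d-k)) - ψ (d-k) (diagVec k₀ (A n) j)‖ * C
         + Cψ k * ‖Ent (B n) ((j:ℤ)+(d-k)) (((j:ℤ)+(d-k))+k) - φ k (diagVec k₀ (A n) j)‖) := by
    intro j hj
    simp only [Finset.mem_range] at hj
    have hjX : diagVec k₀ (A n) j ∈ X := hmem n j hj
    rw [Ent_mul (M n) (B n) k₀ (hBband n) (j:ℤ) ((j:ℤ)+d)]
    unfold stepFun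
    rw [← Finset.sum_sub_distrib]
    refine le_trans (norm_sum_le _ _) (Finset.sum_le_sum fun k _ => ?_)
    set a := diagVec k₀ (A n) j
    set x := Ent (M n) (j:ℤ) (((j:ℤ)+d) - k) with hx
    set y := Ent (B n) (((j:ℤ)+d) - k) ((j:ℤ)+d) with hy
    have hx' : x = Ent (M n) (j:ℤ) ((j:ℤ)+(d-k)) := by rw [hx, add_sub_assoc]
    have hy' : y = Ent (B n) ((j:ℤ)+(d-k)) (((j:ℤ)+(d-k))+k) := by
      rw [hy]
      have e1 : (j:ℤ) + d - k = (j:ℤ)+(d-k) := by ring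
      have e2 : (j:ℤ) + d = ((j:ℤ)+(d-k))+k := by ring
      rw [e1, e2]
    have decomp : x * y - ψ (d-k) a * φ k a
        = (x - ψ (d-k) a) * y + ψ (d-k) a * (y - φ k a) := by ring
    rw [decomp]
    refine le_trans (norm_add_le _ _) ?_
    rw [norm_mul, norm_mul]
    refine add_le_add ?_ ?_
    · rw [hx']
      exact mul_le_mul_of_nonneg_left (hBC n _ _) (norm_nonneg _)
    · rw [hy']
      exact mul_le_mul_of_nonneg_right (hCψ k _ hjX) (norm_nonneg _)
  refine le_trans (Finset.sum_le_sum hbound) ?_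
  rw [Finset.sum_comm]
  refine le_of_eq (Finset.sum_congr rfl fun k _ => ?_)
  rw [Finset.sum_add_distrib, ← Finset.mul_sum, ← Finset.sum_mul, mul_comm]

section facts
variable (k₀ : ℕ) (A : ∀ n : ℕ, Matrix (Fin n) (Fin n) ℂ)
  (X : Set (Fin (2 * k₀ + 1) → ℂ))

lemma exists_entry_bound (hX : IsCompact X)
    (hmem : ∀ n : ℕ, ∀ j : ℕ, j < n → diagVec k₀ (A n) j ∈ X)
    (hband : ∀ n : ℕ, ∀ k j : ℤ, (k₀ : ℤ) < |k| → diagEntry (A n) k j = 0) :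
    ∃ C : ℝ, 0 ≤ C ∧ ∀ n : ℕ, ∀ k j : ℤ, ‖diagEntry (A n) k j‖ ≤ C := by
  obtain ⟨C0, hC0⟩ := hX.exists_bound_of_continuousOn continuous_id.continuousOn
  refine ⟨max C0 0, le_max_right _ _, fun n k j => ?_⟩
  by_cases hk : (k₀:ℤ) < |k|
  · rw [hband n k j hk]; simp [le_max_iff]
  push_neg at hk
  by_cases hj : j < 0 ∨ (n:ℤ) ≤ j + |k|
  · rw [diagEntry_zero_of_out _ _ _ hj]; simp [le_max_iff]
  push_neg at hj
  obtain ⟨hj0, hjn⟩ := hj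
  have hjn' : j.toNat < n := by rcases abs_cases k with ⟨h3,h4⟩|⟨h3,h4⟩ <;> omega
  have hz : diagVec k₀ (A n) j.toNat ∈ X := hmem n j.toNat hjn'
  have he : diagEntry (A n) k j = diagVec k₀ (A n) j.toNat (idx k₀ k) := by
    rw [diagVec_idx k₀ (A n) j.toNat k hk]
    congr 1
    omega
  rw [he]
  calc ‖diagVec k₀ (A n) j.toNat (idx k₀ k)‖ ≤ ‖diagVec k₀ (A n) j.toNat‖ :=
        norm_le_pi_norm _ _
    _ ≤ C0 := hC0 _ hz
    _ ≤ max C0 0 := le_max_left _ _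

variable {k₀ A X}

lemma EntA_band (hband : ∀ n : ℕ, ∀ k j : ℤ, (k₀ : ℤ) < |k| → diagEntry (A n) k j = 0)
    (n : ℕ) (p q : ℤ) (h : (k₀:ℤ) < |q - p|) : Ent (A n) p q = 0 := by
  rw [Ent_eq_diagEntry]; exact hband n _ _ h

lemma EntB_band (hband : ∀ n : ℕ, ∀ k j : ℤ, (k₀ : ℤ) < |k| → diagEntry (A n) k j = 0)
    (n : ℕ) (p q : ℤ) (h : (k₀:ℤ) < |q - p|) : Ent ((A n)ᴴ) p q = 0 := by
  rw [Ent_conjTranspose, Ent_eq_diagEntry, hband n _ _ (by rw [abs_sub_comm] at h; exact h)]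
  simp

lemma EntA_bound {C : ℝ} (hC : ∀ n : ℕ, ∀ k j : ℤ, ‖diagEntry (A n) k j‖ ≤ C)
    (n : ℕ) (p q : ℤ) : ‖Ent (A n) p q‖ ≤ C := by
  rw [Ent_eq_diagEntry]; exact hC n _ _

lemma EntB_bound {C : ℝ} (hC : ∀ n : ℕ, ∀ k j : ℤ, ‖diagEntry (A n) k j‖ ≤ C)
    (n : ℕ) (p q : ℤ) : ‖Ent ((A n)ᴴ) p q‖ ≤ C := by
  rw [Ent_conjTranspose, Ent_eq_diagEntry, starRingEnd_apply, norm_star]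
  exact hC n _ _

lemma approxA (hVMV : VMV A) {C : ℝ}
    (hC : ∀ n : ℕ, ∀ k j : ℤ, ‖diagEntry (A n) k j‖ ≤ C)
    (k c : ℤ) (hk : |k| ≤ (k₀:ℤ)) :
    (fun n : ℕ => ∑ j ∈ Finset.range n,
        ‖Ent (A n) ((j:ℤ)+c) (((j:ℤ)+c)+k) - phiA k₀ k (diagVec k₀ (A n) j)‖)
      =o[atTop] (fun n : ℕ => (n:ℝ)) := by
  have heq : (fun n : ℕ => ∑ j ∈ Finset.range n,
      ‖Ent (A n) ((j:ℤ)+c) (((j:ℤ)+c)+k) - phiA k₀ k (diagVec k₀ (A n) j)‖)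
      = fun n : ℕ => ∑ j ∈ Finset.range n,
        ‖diagEntry (A n) k ((j:ℤ) + (c + min k 0)) - diagEntry (A n) k (j:ℤ)‖ := by
    funext n
    refine Finset.sum_congr rfl fun j _ => ?_
    rw [Ent_eq_diagEntry]
    have e1 : ((j:ℤ)+c)+k - ((j:ℤ)+c) = k := by ring
    have e2 : min ((j:ℤ)+c) (((j:ℤ)+c)+k) = (j:ℤ) + (c + min k 0) := by omega
    rw [e1, e2]
    unfold phiA
    rw [diagVec_idx k₀ (A n) j k hk]
  rw [heq]
  exact shift_littleO A hVMV C hC k (c + min k 0)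

lemma approxB (hVMV : VMV A) {C : ℝ}
    (hC : ∀ n : ℕ, ∀ k j : ℤ, ‖diagEntry (A n) k j‖ ≤ C)
    (k c : ℤ) (hk : |k| ≤ (k₀:ℤ)) :
    (fun n : ℕ => ∑ j ∈ Finset.range n,
        ‖Ent ((A n)ᴴ) ((j:ℤ)+c) (((j:ℤ)+c)+k) - phiB k₀ k (diagVec k₀ (A n) j)‖)
      =o[atTop] (fun n : ℕ => (n:ℝ)) := by
  have heq : (fun n : ℕ => ∑ j ∈ Finset.range n,
      ‖Ent ((A n)ᴴ) ((j:ℤ)+c) (((j:ℤ)+c)+k) - phiB k₀ k (diagVec k₀ (A n) j)‖)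
      = fun n : ℕ => ∑ j ∈ Finset.range n,
        ‖diagEntry (A n) (-k) ((j:ℤ) + (c + min k 0)) - diagEntry (A n) (-k) (j:ℤ)‖ := by
    funext n
    refine Finset.sum_congr rfl fun j _ => ?_
    rw [Ent_conjTranspose, Ent_eq_diagEntry]
    have e1 : ((j:ℤ)+c) - (((j:ℤ)+c)+k) = -k := by ring
    have e2 : min (((j:ℤ)+c)+k) ((j:ℤ)+c) = (j:ℤ) + (c + min k 0) := by omega
    rw [e1, e2]
    unfold phiB
    rw [diagVec_idx k₀ (A n) j (-k) (by rw [abs_neg]; exact hk), ← map_sub, starRingEnd_apply,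
      norm_star]
  rw [heq]
  exact shift_littleO A hVMV C hC (-k) (c + min k 0)

end facts

lemma approx_main (k₀ : ℕ) (A : ∀ n : ℕ, Matrix (Fin n) (Fin n) ℂ)
    (hVMV : VMV A)
    (hband : ∀ n : ℕ, ∀ k j : ℤ, (k₀ : ℤ) < |k| → diagEntry (A n) k j = 0)
    (X : Set (Fin (2 * k₀ + 1) → ℂ)) (hX : IsCompact X)
    (hmem : ∀ n : ℕ, ∀ j : ℕ, j < n → diagVec k₀ (A n) j ∈ X) :
    ∀ r s : ℕ, ∀ d : ℤ, (fun n : ℕ => ∑ j ∈ Finset.range n,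
      ‖Ent ((A n)^r * ((A n)ᴴ)^s) (j:ℤ) ((j:ℤ)+d) - psi k₀ r s d (diagVec k₀ (A n) j)‖)
      =o[atTop] (fun n : ℕ => (n:ℝ)) := by
  obtain ⟨C, hC0, hC⟩ := exists_entry_bound k₀ A X hX hmem hband
  intro r s
  induction s with
  | zero =>
    induction r with
    | zero =>
      intro d
      have hz : (fun n : ℕ => ∑ j ∈ Finset.range n,
          ‖Ent ((A n)^0 * ((A n)ᴴ)^0) (j:ℤ) ((j:ℤ)+d) - psi k₀ 0 0 d (diagVec k₀ (A n) j)‖)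
          = (fun _ : ℕ => (0:ℝ)) := by
        funext n
        refine Finset.sum_eq_zero fun j hj => ?_
        simp only [Finset.mem_range] at hj
        have hjn : (j:ℤ) < (n:ℤ) := by exact_mod_cast hj
        rw [pow_zero, pow_zero, one_mul, psi_zero]
        by_cases hd : d = 0
        · subst hd
          rw [add_zero, Ent_pos _ _ _ ⟨by positivity, hjn, by positivity, hjn⟩]
          simp [Matrix.one_apply]
        · have h1 : Ent (1 : Matrix (Fin n) (Fin n) ℂ) (j:ℤ) ((j:ℤ)+d) = 0 := by
            by_cases hr : 0 ≤ (j:ℤ) ∧ (j:ℤ) < (n:ℤ) ∧ 0 ≤ (j:ℤ)+d ∧ (j:ℤ)+d < (n:ℤ)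
            · rw [Ent_pos _ _ _ hr, Matrix.one_apply_ne]
              intro hcon
              have := congrArg Fin.val hcon
              simp only [Fin.val_mk] at this
              omega
            · exact Ent_zero_of_out _ _ _ hr
          rw [h1]
          simp [hd]
      rw [hz]
      exact isLittleO_zero _ _
    | succ r ih =>
      intro d
      have hstep := step_littleO k₀ A X hX hmem C A (phiA k₀)
        (EntA_band hband) (EntA_bound hC) (fun k c hk => approxA hVMV hC k c hk)
        (fun n => (A n)^r * ((A n)ᴴ)^0) (psi k₀ r 0) (psi_continuous k₀ r 0) ih d
      have hmat : ∀ n : ℕ, (A n)^(r+1) * ((A n)ᴴ)^0 = ((A n)^r * ((A n)ᴴ)^0) * (A n) := by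
        intro n
        rw [pow_zero, mul_one, mul_one, pow_succ]
      rw [psi_succ_r]
      simp only [hmat]
      exact hstep
  | succ s ih =>
    intro d
    have hstep := step_littleO k₀ A X hX hmem C (fun n => (A n)ᴴ) (phiB k₀)
      (EntB_band hband) (EntB_bound hC) (fun k c hk => approxB hVMV hC k c hk)
      (fun n => (A n)^r * ((A n)ᴴ)^s) (psi k₀ r s) (psi_continuous k₀ r s) ih d
    have hmat : ∀ n : ℕ, (A n)^r * ((A n)ᴴ)^(s+1) = ((A n)^r * ((A n)ᴴ)^s) * ((A n)ᴴ) := by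
      intro n
      rw [pow_succ, mul_assoc]
    rw [psi_succ_s]
    simp only [hmat]
    exact hstep

lemma idx_sub (k₀ : ℕ) (i : Fin (2*k₀+1)) : idx k₀ ((i:ℤ) - k₀) = i := by
  refine Fin.ext ?_
  simp only [idx, Fin.val_mk]
  have h1 : (((i:ℕ):ℤ) - k₀ + k₀).toNat = (i:ℕ) := by omega
  rw [h1, Nat.mod_eq_of_lt i.2]

lemma sum_Icc_fin (k₀ : ℕ) (f : ℤ → ℂ) :
    ∑ k ∈ Finset.Icc (-(k₀:ℤ)) (k₀:ℤ), f k = ∑ i : Fin (2*k₀+1), f ((i:ℤ) - k₀) := by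
  refine Finset.sum_bij' (fun k _ => idx k₀ k) (fun i _ => (i:ℤ) - k₀) ?_ ?_ ?_ ?_ ?_
  · intro a ha; exact Finset.mem_univ _
  · intro i _
    have hi := i.2
    simp only [Finset.mem_Icc]
    omega
  · intro a ha
    simp only [Finset.mem_Icc] at ha
    rw [idx_coe k₀ a (by rw [abs_le]; omega)]
    ring
  · intro i _; exact idx_sub k₀ i
  · intro a ha
    simp only [Finset.mem_Icc] at ha
    rw [idx_coe k₀ a (by rw [abs_le]; omega)]
    congr 1
    ring

lemma sum_Icc_neg (a : ℕ) (f : ℤ → ℂ) :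
    ∑ k ∈ Finset.Icc (-(a:ℤ)) (a:ℤ), f k = ∑ k ∈ Finset.Icc (-(a:ℤ)) (a:ℤ), f (-k) := by
  refine Finset.sum_bij' (fun k _ => -k) (fun k _ => -k) ?_ ?_ ?_ ?_ ?_
  · intro x hx; simp only [Finset.mem_Icc] at *; omega
  · intro x hx; simp only [Finset.mem_Icc] at *; omega
  · intro x hx; rw [neg_neg]
  · intro x hx; rw [neg_neg]
  · intro x hx; rw [neg_neg]

lemma bandP_sum (k₀ : ℕ) (z : Fin (2*k₀+1) → ℂ) (t : ℝ) :
    bandP k₀ z t = ∑ k ∈ Finset.Icc (-(k₀:ℤ)) (k₀:ℤ),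
      z (idx k₀ k) * Complex.exp (Complex.I * (k:ℂ) * (t:ℂ)) := by
  rw [sum_Icc_fin k₀ (fun k => z (idx k₀ k) * Complex.exp (Complex.I * (k:ℂ) * (t:ℂ)))]
  unfold bandP
  refine Finset.sum_congr rfl fun i _ => ?_
  rw [idx_sub k₀ i]

lemma conj_bandP (k₀ : ℕ) (z : Fin (2*k₀+1) → ℂ) (t : ℝ) :
    (starRingEnd ℂ) (bandP k₀ z t) = ∑ k ∈ Finset.Icc (-(k₀:ℤ)) (k₀:ℤ),
      (starRingEnd ℂ) (z (idx k₀ (-k))) * Complex.exp (Complex.I * (k:ℂ) * (t:ℂ)) := by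
  rw [sum_Icc_neg]
  simp only [neg_neg]
  rw [sum_Icc_fin k₀ (fun k => (starRingEnd ℂ) (z (idx k₀ k)) *
    Complex.exp (Complex.I * ((-k : ℤ):ℂ) * (t:ℂ)))]
  unfold bandP
  rw [map_sum]
  refine Finset.sum_congr rfl fun i _ => ?_
  rw [idx_sub k₀ i, _root_.map_mul, ← Complex.exp_conj]
  congr 2
  simp only [_root_.map_mul, Complex.conj_I, Complex.conj_ofReal, map_intCast]
  push_cast
  ring

lemma bandP_continuous (k₀ : ℕ) (z : Fin (2*k₀+1) → ℂ) :
    Continuous fun t : ℝ => bandP k₀ z t := by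
  unfold bandP
  refine continuous_finset_sum _ fun i _ => ?_
  exact continuous_const.mul (Complex.continuous_exp.comp
    ((continuous_const.mul Complex.continuous_ofReal)))

lemma integral_exp_int (m : ℤ) :
    (∫ t in (-Real.pi)..Real.pi, Complex.exp (Complex.I * (m:ℂ) * (t:ℂ)))
      = if m = 0 then (2*(Real.pi:ℂ)) else 0 := by
  by_cases hm : m = 0
  · subst hm
    simp only [Int.cast_zero, mul_zero, zero_mul, Complex.exp_zero, if_true]
    rw [intervalIntegral.integral_const]
    push_cast
    rw [Complex.real_smul]
    push_cast
    ring
  · rw [if_neg hm]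
    have hc : Complex.I * (m:ℂ) ≠ 0 :=
      mul_ne_zero Complex.I_ne_zero (Int.cast_ne_zero.mpr hm)
    rw [integral_exp_mul_complex hc]
    have : Complex.exp (Complex.I * (m:ℂ) * ((Real.pi : ℝ) : ℂ))
        = Complex.exp (Complex.I * (m:ℂ) * ((-Real.pi : ℝ) : ℂ)) := by
      rw [Complex.exp_eq_exp_iff_exists_int]
      refine ⟨m, ?_⟩
      push_cast
      ring
    rw [this, sub_self, zero_div]

noncomputable def Fsym (k₀ : ℕ) (r s : ℕ) (z : Fin (2*k₀+1) → ℂ) (t : ℝ) : ℂ :=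
  (bandP k₀ z t)^r * ((starRingEnd ℂ) (bandP k₀ z t))^s

lemma Fsym_continuous (k₀ : ℕ) (r s : ℕ) (z : Fin (2*k₀+1) → ℂ) :
    Continuous (Fsym k₀ r s z) := by
  unfold Fsym
  exact ((bandP_continuous k₀ z).pow r).mul
    ((Complex.continuous_conj.comp (bandP_continuous k₀ z)).pow s)

lemma cont_exp_lin (a : ℂ) : Continuous fun t : ℝ => Complex.exp (a * (t:ℂ)) :=
  Complex.continuous_exp.comp (continuous_const.mul Complex.continuous_ofReal)

lemma cont_exp_neg (a : ℂ) : Continuous fun t : ℝ => Complex.exp (-(a * (t:ℂ))) :=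
  Complex.continuous_exp.comp (continuous_const.mul Complex.continuous_ofReal).neg

lemma fourier_step (k₀ : ℕ) (ψ : ℤ → (Fin (2*k₀+1) → ℂ) → ℂ)
    (φ : ℤ → (Fin (2*k₀+1) → ℂ) → ℂ)
    (Φ : (Fin (2*k₀+1) → ℂ) → ℝ → ℂ)
    (hΦ : ∀ z t, Φ z t = ∑ k ∈ Finset.Icc (-(k₀:ℤ)) (k₀:ℤ),
      φ k z * Complex.exp (Complex.I * (k:ℂ) * (t:ℂ)))
    (F : (Fin (2*k₀+1) → ℂ) → ℝ → ℂ) (hFcont : ∀ z, Continuous (F z))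
    (hψ : ∀ d : ℤ, ∀ z, ψ d z = (2*(Real.pi:ℂ))⁻¹ *
      ∫ t in (-Real.pi)..Real.pi, F z t * Complex.exp (-(Complex.I * (d:ℂ) * (t:ℂ))))
    (d : ℤ) (z : Fin (2*k₀+1) → ℂ) :
    stepFun k₀ φ ψ d z = (2*(Real.pi:ℂ))⁻¹ *
      ∫ t in (-Real.pi)..Real.pi,
        (F z t * Φ z t) * Complex.exp (-(Complex.I * (d:ℂ) * (t:ℂ))) := by
  unfold stepFun
  have hterm : ∀ k ∈ Finset.Icc (-(k₀:ℤ)) (k₀:ℤ), ψ (d - k) z * φ k z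
      = (2*(Real.pi:ℂ))⁻¹ * ∫ t in (-Real.pi)..Real.pi,
          (F z t * Complex.exp (-(Complex.I * (d:ℂ) * (t:ℂ)))) *
            (φ k z * Complex.exp (Complex.I * (k:ℂ) * (t:ℂ))) := by
    intro k _
    rw [hψ (d - k) z, mul_assoc, ← intervalIntegral.integral_mul_const]
    congr 1
    refine intervalIntegral.integral_congr fun t _ => ?_
    have he : Complex.exp (-(Complex.I * ((d - k : ℤ):ℂ) * (t:ℂ)))
        = Complex.exp (-(Complex.I * (d:ℂ) * (t:ℂ))) * Complex.exp (Complex.I * (k:ℂ) * (t:ℂ)) := by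
      rw [← Complex.exp_add]
      congr 1
      push_cast
      ring
    rw [he]
    ring
  rw [Finset.sum_congr rfl hterm, ← Finset.mul_sum]
  congr 1
  rw [← intervalIntegral.integral_finset_sum]
  · refine intervalIntegral.integral_congr fun t _ => ?_
    rw [← Finset.mul_sum, hΦ z t]
    ring
  · intro k _
    refine Continuous.intervalIntegrable ?_ _ _
    exact ((hFcont z).mul (cont_exp_neg _)).mul (continuous_const.mul (cont_exp_lin _))

lemma psi_fourier (k₀ : ℕ) (r s : ℕ) : ∀ (d : ℤ) (z : Fin (2*k₀+1) → ℂ),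
    psi k₀ r s d z = (2*(Real.pi:ℂ))⁻¹ *
      ∫ t in (-Real.pi)..Real.pi, Fsym k₀ r s z t *
        Complex.exp (-(Complex.I * (d:ℂ) * (t:ℂ))) := by
  induction s with
  | zero =>
    induction r with
    | zero =>
      intro d z
      rw [psi_zero]
      have h1 : ∀ t : ℝ, Fsym k₀ 0 0 z t * Complex.exp (-(Complex.I * (d:ℂ) * (t:ℂ)))
          = Complex.exp (Complex.I * ((-d : ℤ):ℂ) * (t:ℂ)) := by
        intro t
        unfold Fsym
        rw [pow_zero, pow_zero, one_mul, one_mul]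
        congr 1
        push_cast
        ring
      rw [intervalIntegral.integral_congr (fun t _ => h1 t), integral_exp_int (-d)]
      by_cases hd : d = 0
      · subst hd
        show (if (0:ℤ) = 0 then (1:ℂ) else 0)
          = (2*(Real.pi:ℂ))⁻¹ * (if (-0:ℤ) = 0 then 2*(Real.pi:ℂ) else 0)
        rw [if_pos rfl, if_pos (by ring), inv_mul_cancel₀
          (mul_ne_zero two_ne_zero (Complex.ofReal_ne_zero.mpr Real.pi_ne_zero))]
      · show (if d = 0 then (1:ℂ) else 0)
          = (2*(Real.pi:ℂ))⁻¹ * (if (-d:ℤ) = 0 then 2*(Real.pi:ℂ) else 0)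
        rw [if_neg hd, if_neg (by omega), mul_zero]
    | succ r ih =>
      intro d z
      rw [psi_succ_r]
      rw [fourier_step k₀ (psi k₀ r 0) (phiA k₀) (fun z t => bandP k₀ z t)
        (fun z t => bandP_sum k₀ z t) (Fsym k₀ r 0) (fun z => Fsym_continuous k₀ r 0 z) ih d z]
      congr 1
      refine intervalIntegral.integral_congr fun t _ => ?_
      unfold Fsym
      ring
  | succ s ih =>
    intro d z
    rw [psi_succ_s]
    rw [fourier_step k₀ (psi k₀ r s) (phiB k₀) (fun z t => (starRingEnd ℂ) (bandP k₀ z t))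
      (fun z t => conj_bandP k₀ z t) (Fsym k₀ r s) (fun z => Fsym_continuous k₀ r s z) ih d z]
    congr 1
    refine intervalIntegral.integral_congr fun t _ => ?_
    unfold Fsym
    ring

lemma Fsym_joint_continuous (k₀ : ℕ) (r s : ℕ) :
    Continuous fun p : (Fin (2*k₀+1) → ℂ) × ℝ => Fsym k₀ r s p.1 p.2 := by
  have hb : Continuous fun p : (Fin (2*k₀+1) → ℂ) × ℝ => bandP k₀ p.1 p.2 := by
    unfold bandP
    refine continuous_finset_sum _ fun i _ => ?_
    exact ((continuous_apply i).comp continuous_fst).mul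
      (Complex.continuous_exp.comp
        (continuous_const.mul (Complex.continuous_ofReal.comp continuous_snd)))
  unfold Fsym
  exact (hb.pow r).mul ((Complex.continuous_conj.comp hb).pow s)

lemma integral_psi_eq (k₀ : ℕ) (r s : ℕ)
    (X : Set (Fin (2 * k₀ + 1) → ℂ)) (hX : IsCompact X)
    (μ : Measure (Fin (2 * k₀ + 1) → ℂ)) [IsProbabilityMeasure μ] :
    ∫ z in X, psi k₀ r s 0 z ∂μ = (2 * (Real.pi : ℂ))⁻¹ *
      ∫ t in (-Real.pi)..Real.pi, ∫ z in X, Fsym k₀ r s z t ∂μ := by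
  have hpi : -Real.pi ≤ Real.pi := by linarith [Real.pi_pos]
  have hψ0 : ∀ z, psi k₀ r s 0 z
      = (2*(Real.pi:ℂ))⁻¹ * ∫ t in (-Real.pi)..Real.pi, Fsym k₀ r s z t := by
    intro z
    rw [psi_fourier k₀ r s 0 z]
    congr 1
    refine intervalIntegral.integral_congr fun t _ => ?_
    simp
  -- integrability on the product
  haveI : IsFiniteMeasure (μ.restrict X) :=
    ⟨by rw [Measure.restrict_apply_univ]; exact measure_lt_top μ X⟩
  haveI : IsFiniteMeasure (volume.restrict (Set.Ioc (-Real.pi) Real.pi)) :=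
    ⟨by rw [Measure.restrict_apply_univ, Real.volume_Ioc]; exact ENNReal.ofReal_lt_top⟩
  obtain ⟨Cf, hCf⟩ := (hX.prod (isCompact_Icc (a := -Real.pi) (b := Real.pi))).exists_bound_of_continuousOn
    (Fsym_joint_continuous k₀ r s).continuousOn
  have hint : Integrable (Function.uncurry fun z t => Fsym k₀ r s z t)
      ((μ.restrict X).prod (volume.restrict (Set.Ioc (-Real.pi) Real.pi))) := by
    refine Integrable.mono' (integrable_const Cf)
      ((Fsym_joint_continuous k₀ r s).aestronglyMeasurable) ?_
    rw [Measure.prod_restrict]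
    refine (ae_restrict_mem ((hX.isClosed.measurableSet).prod measurableSet_Ioc)).mono ?_
    rintro ⟨z, t⟩ ⟨hz, ht⟩
    exact hCf (z, t) ⟨hz, Set.Ioc_subset_Icc_self ht⟩
  have hswap : ∫ z in X, (∫ t in (-Real.pi)..Real.pi, Fsym k₀ r s z t) ∂μ
      = ∫ t in (-Real.pi)..Real.pi, ∫ z in X, Fsym k₀ r s z t ∂μ := by
    have h1 : ∀ z, (∫ t in (-Real.pi)..Real.pi, Fsym k₀ r s z t)
        = ∫ t in Set.Ioc (-Real.pi) Real.pi, Fsym k₀ r s z t := fun z =>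
      intervalIntegral.integral_of_le hpi
    simp only [h1]
    rw [intervalIntegral.integral_of_le hpi]
    exact integral_integral_swap hint
  calc ∫ z in X, psi k₀ r s 0 z ∂μ
      = ∫ z in X, (2*(Real.pi:ℂ))⁻¹ * (∫ t in (-Real.pi)..Real.pi, Fsym k₀ r s z t) ∂μ := by
        simp only [hψ0]
    _ = (2*(Real.pi:ℂ))⁻¹ * ∫ z in X, (∫ t in (-Real.pi)..Real.pi, Fsym k₀ r s z t) ∂μ :=
        integral_const_mul _ _
    _ = (2 * (Real.pi : ℂ))⁻¹ * ∫ t in (-Real.pi)..Real.pi, ∫ z in X, Fsym k₀ r s z t ∂μ := by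
        rw [hswap]

/-- **Trace moments of μ-distributed VMV band-matrix sequences.**
If `{Aₙ} ∈ VMV` has fixed band size `k₀` and is `μ`-distributed on a compact
`X ⊆ ℂ^{2k₀+1}`, then for all `r s : ℕ`,
`(1/n) Tr[Aₙ^r (Aₙ*)^s] → (1/2π) ∫_{-π}^{π} ∫_X P(z,t)^r conj(P(z,t))^s dμ(z) dt`. -/
theorem trace_moments_band (k₀ : ℕ) (A : ∀ n : ℕ, Matrix (Fin n) (Fin n) ℂ)
    (hVMV : VMV A)
    (hband : ∀ n : ℕ, ∀ k j : ℤ, (k₀ : ℤ) < |k| → diagEntry (A n) k j = 0)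
    (X : Set (Fin (2 * k₀ + 1) → ℂ)) (hX : IsCompact X)
    (μ : Measure (Fin (2 * k₀ + 1) → ℂ)) [IsProbabilityMeasure μ] (hμX : μ Xᶜ = 0)
    (hmem : ∀ n : ℕ, ∀ j : ℕ, j < n → diagVec k₀ (A n) j ∈ X)
    (hdist : ∀ g : (Fin (2 * k₀ + 1) → ℂ) → ℂ, ContinuousOn g X →
      Tendsto (fun n : ℕ => (n : ℂ)⁻¹ * ∑ j ∈ Finset.range n, g (diagVec k₀ (A n) j)) atTop
        (𝓝 (∫ z in X, g z ∂μ)))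
    (r s : ℕ) :
    Tendsto (fun n : ℕ => (n : ℂ)⁻¹ * Matrix.trace ((A n) ^ r * ((A n)ᴴ) ^ s)) atTop
      (𝓝 ((2 * (Real.pi : ℂ))⁻¹ * ∫ t in (-Real.pi)..Real.pi,
        ∫ z in X, (bandP k₀ z t) ^ r * (starRingEnd ℂ (bandP k₀ z t)) ^ s ∂μ)) := by
  have happrox := approx_main k₀ A hVMV hband X hX hmem r s 0
  simp only [add_zero] at happrox
  set g : (Fin (2 * k₀ + 1) → ℂ) → ℂ := psi k₀ r s 0 with hgdef
  have hdist' := hdist g (psi_continuous k₀ r s 0).continuousOn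
  set T : ℕ → ℂ := fun n => Matrix.trace ((A n) ^ r * ((A n)ᴴ) ^ s) with hT
  set S : ℕ → ℂ := fun n => ∑ j ∈ Finset.range n, g (diagVec k₀ (A n) j) with hS
  set err : ℕ → ℝ := fun n => ∑ j ∈ Finset.range n,
    ‖Ent ((A n)^r * ((A n)ᴴ)^s) (j:ℤ) (j:ℤ) - psi k₀ r s 0 (diagVec k₀ (A n) j)‖ with herr
  have hbound : ∀ n : ℕ, ‖(n:ℂ)⁻¹ * T n - (n:ℂ)⁻¹ * S n‖ ≤ err n / (n:ℝ) := by
    intro n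
    have hTS : T n - S n = ∑ j ∈ Finset.range n,
        (Ent ((A n)^r * ((A n)ᴴ)^s) (j:ℤ) (j:ℤ) - psi k₀ r s 0 (diagVec k₀ (A n) j)) := by
      rw [hT, hS, hgdef]
      dsimp only
      rw [trace_eq_sum_Ent, ← Finset.sum_sub_distrib]
    rw [← mul_sub, norm_mul, hTS]
    have h1 : ‖(n:ℂ)⁻¹‖ = ((n:ℝ))⁻¹ := by
      rw [norm_inv, Complex.norm_natCast]
    rw [h1, div_eq_inv_mul]
    exact mul_le_mul_of_nonneg_left (norm_sum_le _ _) (by positivity)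
  have hdiff : Tendsto (fun n : ℕ => (n:ℂ)⁻¹ * T n - (n:ℂ)⁻¹ * S n) atTop (𝓝 0) := by
    rw [tendsto_zero_iff_norm_tendsto_zero]
    refine squeeze_zero (fun n => norm_nonneg _) hbound ?_
    exact happrox.tendsto_div_nhds_zero
  have hmain : Tendsto (fun n : ℕ => (n:ℂ)⁻¹ * T n) atTop (𝓝 (0 + ∫ z in X, g z ∂μ)) := by
    have := hdiff.add hdist'
    refine this.congr fun n => ?_
    ring
  rw [zero_add] at hmain
  have hval : ∫ z in X, g z ∂μ = (2 * (Real.pi : ℂ))⁻¹ * ∫ t in (-Real.pi)..Real.pi,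
      ∫ z in X, (bandP k₀ z t) ^ r * (starRingEnd ℂ (bandP k₀ z t)) ^ s ∂μ := by
    rw [hgdef]
    exact integral_psi_eq k₀ r s X hX μ
  rw [hval] at hmain
  exact hmain
end

section
/- Let M > 0 and let {A_n} and {B_n} be sequences of Hermitian n×n complex matrices with spectral norms ‖A_n‖_∞ ≤ M and ‖B_n‖_∞ ≤ M for all n, and with ‖A_n − B_n‖_tr = o(n) as n → ∞. Then for every continuous function φ : ℝ → ℝ, one has Σ_{k=1}^{n} φ(λ_k(A_n)) − Σ_{k=1}^{n} φ(λ_k(B_n)) = o(n) as n → ∞, where λ_1, …, λ_n denote the (real) eigenvalues counted with multiplicity. -/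
open Filter Asymptotics Matrix
open scoped Matrix.Norms.L2Operator

/-- The spectral norm (ℓ² → ℓ² operator norm, i.e. the largest singular value)
of a complex matrix. -/
noncomputable def specNorm {n : ℕ} (A : Matrix (Fin n) (Fin n) ℂ) : ℝ :=
  ‖LinearMap.toContinuousLinearMap (Matrix.toEuclideanLin A)‖

/-- The trace norm `‖A‖_tr = ∑ σ_k(A)`, the sum of the singular values of `A`,
i.e. of the square roots of the eigenvalues of `Aᴴ A`. -/
noncomputable def traceNorm {n : ℕ} (A : Matrix (Fin n) (Fin n) ℂ) : ℝ :=
  ∑ i, Real.sqrt ((Matrix.isHermitian_conjTranspose_mul_self A).eigenvalues i)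

section Aux

variable {n : ℕ}

lemma specNorm_eq_l2 (A : Matrix (Fin n) (Fin n) ℂ) : specNorm A = ‖A‖ := rfl

lemma traceNorm_nonneg' (A : Matrix (Fin n) (Fin n) ℂ) : 0 ≤ traceNorm A :=
  Finset.sum_nonneg fun _ _ => Real.sqrt_nonneg _

lemma trace_cfc' (A : Matrix (Fin n) (Fin n) ℂ) (hA : A.IsHermitian) (f : ℝ → ℝ) :
    (hA.cfc f).trace = ∑ i, (f (hA.eigenvalues i) : ℂ) := by
  rw [Matrix.IsHermitian.cfc, Unitary.conjStarAlgAut_apply, trace_mul_cycle]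
  rw [SetLike.coe_mem _ |> Unitary.star_mul_self_of_mem]
  simp [trace_diagonal]

lemma eig_abs_le (A : Matrix (Fin n) (Fin n) ℂ) (hA : A.IsHermitian) (i : Fin n) :
    |hA.eigenvalues i| ≤ ‖A‖ := by
  have hv := hA.mulVec_eigenvectorBasis i
  set v : EuclideanSpace ℂ (Fin n) := hA.eigenvectorBasis i with hvdef
  have hnv : ‖v‖ = 1 := hA.eigenvectorBasis.orthonormal.1 i
  have h := A.l2_opNorm_mulVec v
  have h2 : (EuclideanSpace.equiv (Fin n) ℂ).symm (A *ᵥ v) = hA.eigenvalues i • v := by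
    exact congrArg (EuclideanSpace.equiv (Fin n) ℂ).symm hv
  rw [h2, norm_smul, hnv, Real.norm_eq_abs, mul_one, mul_one] at h
  exact h

lemma entry_abs_le (U : Matrix.unitaryGroup (Fin n) ℂ) (Y : Matrix (Fin n) (Fin n) ℂ) (i : Fin n) :
    ‖(star (U : Matrix (Fin n) (Fin n) ℂ) * Y * U) i i‖ ≤ ‖Y‖ := by
  set u : EuclideanSpace ℂ (Fin n) := WithLp.toLp 2 (fun j => (U : Matrix (Fin n) (Fin n) ℂ) j i) with hu
  have hnu : ‖u‖ = 1 := by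
    have h1 : ((star (U : Matrix (Fin n) (Fin n) ℂ)) * U) i i = 1 := by
      rw [SetLike.coe_mem U |> Unitary.star_mul_self_of_mem]; simp
    have h2 : ((star (U : Matrix (Fin n) (Fin n) ℂ)) * U) i i = inner (𝕜 := ℂ) u u := by
      simp [Matrix.mul_apply, Matrix.star_apply, hu, PiLp.inner_apply, mul_comm, -inner_self_eq_norm_sq_to_K]
    have h3 : (inner (𝕜 := ℂ) u u).re = 1 := by rw [← h2, h1]; simp
    have h4 : ‖u‖ ^ 2 = 1 := by
      rw [← @inner_self_eq_norm_sq ℂ _ _ _ _ u]; exact h3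
    nlinarith [norm_nonneg u]
  have key : (star (U : Matrix (Fin n) (Fin n) ℂ) * Y * U) i i
      = inner (𝕜 := ℂ) u ((EuclideanSpace.equiv (Fin n) ℂ).symm (Y *ᵥ u)) := by
    simp only [Matrix.mul_apply, PiLp.inner_apply, RCLike.inner_apply, Matrix.star_apply,
      EuclideanSpace.equiv, PiLp.coe_symm_continuousLinearEquiv, PiLp.toLp_apply, hu,
      Matrix.mulVec, dotProduct, Finset.mul_sum, Finset.sum_mul]
    rw [Finset.sum_comm]
    exact Finset.sum_congr rfl fun _ _ => Finset.sum_congr rfl fun _ _ => by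
      simp [Matrix.star_apply]; ring
  rw [key]
  calc ‖inner (𝕜 := ℂ) u ((EuclideanSpace.equiv (Fin n) ℂ).symm (Y *ᵥ u))‖
      ≤ ‖u‖ * ‖(EuclideanSpace.equiv (Fin n) ℂ).symm (Y *ᵥ u)‖ := norm_inner_le_norm u _
    _ ≤ ‖u‖ * (‖Y‖ * ‖u‖) :=
        mul_le_mul_of_nonneg_left (Y.l2_opNorm_mulVec u) (norm_nonneg u)
    _ = ‖Y‖ := by rw [hnu]; ring

lemma holder (C Y : Matrix (Fin n) (Fin n) ℂ) (hC : C.IsHermitian) :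
    ‖(C * Y).trace‖ ≤ (∑ i, |hC.eigenvalues i|) * ‖Y‖ := by
  set U := hC.eigenvectorUnitary
  set D : Matrix (Fin n) (Fin n) ℂ := diagonal (Complex.ofReal ∘ hC.eigenvalues)
  have hspec : C = (U : Matrix (Fin n) (Fin n) ℂ) * D * star (U : Matrix (Fin n) (Fin n) ℂ) :=
    hC.spectral_theorem
  have h1 : (C * Y).trace = (D * (star (U : Matrix (Fin n) (Fin n) ℂ) * Y * U)).trace := by
    rw [hspec]
    rw [show (U : Matrix (Fin n) (Fin n) ℂ) * D * star (U : Matrix (Fin n) (Fin n) ℂ) * Y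
        = (U : Matrix (Fin n) (Fin n) ℂ) * (D * (star (U : Matrix (Fin n) (Fin n) ℂ) * Y)) by
      simp [mul_assoc]]
    rw [trace_mul_comm]
    simp [mul_assoc]
  rw [h1]
  have h2 : (D * (star (U : Matrix (Fin n) (Fin n) ℂ) * Y * U)).trace
      = ∑ i, (hC.eigenvalues i : ℂ) * (star (U : Matrix (Fin n) (Fin n) ℂ) * Y * U) i i := by
    simp [Matrix.trace, Matrix.diag, Matrix.diagonal_mul, D]
  rw [h2]
  calc ‖∑ i, (hC.eigenvalues i : ℂ) * (star (U : Matrix (Fin n) (Fin n) ℂ) * Y * U) i i‖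
      ≤ ∑ i, ‖(hC.eigenvalues i : ℂ) * (star (U : Matrix (Fin n) (Fin n) ℂ) * Y * U) i i‖ :=
        norm_sum_le _ _
    _ ≤ ∑ i, |hC.eigenvalues i| * ‖Y‖ := by
        refine Finset.sum_le_sum fun i _ => ?_
        rw [norm_mul, Complex.norm_real, Real.norm_eq_abs]
        exact mul_le_mul_of_nonneg_left (entry_abs_le U Y i) (abs_nonneg _)
    _ = (∑ i, |hC.eigenvalues i|) * ‖Y‖ := (Finset.sum_mul _ _ _).symm

lemma traceNorm_eq_sum_abs (C : Matrix (Fin n) (Fin n) ℂ) (hC : C.IsHermitian) :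
    traceNorm C = ∑ i, |hC.eigenvalues i| := by
  have hsa : IsSelfAdjoint C := hC
  have h1 : Cᴴ * C = C ^ 2 := by rw [hC.eq, sq]
  have h2 : cfc Real.sqrt (Cᴴ * C) = cfc (fun x : ℝ => |x|) C := by
    rw [h1, ← cfc_pow_id (R := ℝ) C, ← cfc_comp Real.sqrt (fun x : ℝ => x ^ 2) C]
    exact cfc_congr fun x _ => Real.sqrt_sq_eq_abs x
  have h3 : cfc Real.sqrt (Cᴴ * C) = (Matrix.isHermitian_conjTranspose_mul_self C).cfc Real.sqrt :=
    (Matrix.isHermitian_conjTranspose_mul_self C).cfc_eq Real.sqrt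
  have h4 : cfc (fun x : ℝ => |x|) C = hC.cfc (fun x : ℝ => |x|) := hC.cfc_eq _
  have h5 := congrArg Matrix.trace (h3.symm.trans (h2.trans h4))
  rw [trace_cfc' _ _ _, trace_cfc' _ _ _] at h5
  have h6 : ((traceNorm C : ℝ) : ℂ) = ((∑ i, |hC.eigenvalues i| : ℝ) : ℂ) := by
    push_cast
    simpa [traceNorm] using h5
  exact_mod_cast h6

lemma norm_one_le' : ‖(1 : Matrix (Fin n) (Fin n) ℂ)‖ ≤ 1 := by
  rw [Matrix.cstar_norm_def, _root_.map_one]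
  exact ContinuousLinearMap.norm_id_le

lemma norm_pow_le'' (A : Matrix (Fin n) (Fin n) ℂ) {M : ℝ} (hA : ‖A‖ ≤ M) (hM : 0 ≤ M) (k : ℕ) :
    ‖A ^ k‖ ≤ M ^ k := by
  induction k with
  | zero => simpa using norm_one_le'
  | succ k ih =>
      rw [pow_succ, pow_succ]
      calc ‖A ^ k * A‖ ≤ ‖A ^ k‖ * ‖A‖ := Matrix.l2_opNorm_mul _ _
        _ ≤ M ^ k * M := mul_le_mul ih hA (norm_nonneg _) (pow_nonneg hM _)

lemma telescope (A B : Matrix (Fin n) (Fin n) ℂ) (k : ℕ) :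
    A ^ k - B ^ k = ∑ j ∈ Finset.range k, A ^ j * (A - B) * B ^ (k - 1 - j) := by
  induction k with
  | zero => simp
  | succ k ih =>
      rw [Finset.sum_range_succ]
      have hlast : A ^ k * (A - B) * B ^ (k + 1 - 1 - k) = A ^ (k+1) - A ^ k * B := by
        simp [pow_succ, mul_sub]
      have hrest : ∑ j ∈ Finset.range k, A ^ j * (A - B) * B ^ (k + 1 - 1 - j)
          = (A ^ k - B ^ k) * B := by
        rw [ih, Finset.sum_mul]
        refine Finset.sum_congr rfl fun j hj => ?_
        have hj' : j < k := Finset.mem_range.mp hj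
        have he : k + 1 - 1 - j = (k - 1 - j) + 1 := by omega
        rw [he, pow_succ, mul_assoc, mul_assoc, mul_assoc]
      rw [hrest, hlast]
      noncomm_ring

lemma trace_pow (A : Matrix (Fin n) (Fin n) ℂ) (hA : A.IsHermitian) (k : ℕ) :
    (A ^ k).trace = ((∑ i, hA.eigenvalues i ^ k : ℝ) : ℂ) := by
  have hsa : IsSelfAdjoint A := hA
  rw [← cfc_pow_id (R := ℝ) A, hA.cfc_eq, trace_cfc']
  push_cast
  rfl

/-- Power sum comparison. -/
lemma sum_pow_eig_sub (A B : Matrix (Fin n) (Fin n) ℂ) (hA : A.IsHermitian) (hB : B.IsHermitian)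
    {M : ℝ} (hMA : ‖A‖ ≤ M) (hMB : ‖B‖ ≤ M) (hM : 0 ≤ M) (k : ℕ) :
    |(∑ i, hA.eigenvalues i ^ k) - ∑ i, hB.eigenvalues i ^ k|
      ≤ (k : ℝ) * M ^ (k - 1) * traceNorm (A - B) := by
  have hC : (A - B).IsHermitian := hA.sub hB
  have key : ‖(A ^ k - B ^ k).trace‖ ≤ (k : ℝ) * M ^ (k - 1) * traceNorm (A - B) := by
    rw [telescope A B k, Matrix.trace_sum]
    calc ‖∑ j ∈ Finset.range k, (A ^ j * (A - B) * B ^ (k - 1 - j)).trace‖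
        ≤ ∑ j ∈ Finset.range k, ‖(A ^ j * (A - B) * B ^ (k - 1 - j)).trace‖ := norm_sum_le _ _
      _ ≤ ∑ j ∈ Finset.range k, M ^ (k - 1) * traceNorm (A - B) := by
          refine Finset.sum_le_sum fun j hj => ?_
          have hj' : j < k := Finset.mem_range.mp hj
          have htr : (A ^ j * (A - B) * B ^ (k - 1 - j)).trace
              = ((A - B) * (B ^ (k - 1 - j) * A ^ j)).trace := by
            rw [trace_mul_cycle, trace_mul_comm]
          rw [htr]
          have hY : ‖B ^ (k - 1 - j) * A ^ j‖ ≤ M ^ (k - 1) := by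
            calc ‖B ^ (k - 1 - j) * A ^ j‖ ≤ ‖B ^ (k - 1 - j)‖ * ‖A ^ j‖ :=
                  Matrix.l2_opNorm_mul _ _
              _ ≤ M ^ (k - 1 - j) * M ^ j :=
                  mul_le_mul (norm_pow_le'' B hMB hM _) (norm_pow_le'' A hMA hM _)
                    (norm_nonneg _) (pow_nonneg hM _)
              _ = M ^ (k - 1) := by rw [← pow_add]; congr 1; omega
          calc ‖((A - B) * (B ^ (k - 1 - j) * A ^ j)).trace‖
              ≤ (∑ i, |hC.eigenvalues i|) * ‖B ^ (k - 1 - j) * A ^ j‖ := holder _ _ hC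
            _ ≤ (∑ i, |hC.eigenvalues i|) * M ^ (k - 1) :=
                mul_le_mul_of_nonneg_left hY
                  (Finset.sum_nonneg fun _ _ => abs_nonneg _)
            _ = M ^ (k - 1) * traceNorm (A - B) := by
                rw [traceNorm_eq_sum_abs _ hC]; ring
      _ = (k : ℝ) * M ^ (k - 1) * traceNorm (A - B) := by
          rw [Finset.sum_const, Finset.card_range]; push_cast; ring
  have heq : ((∑ i, hA.eigenvalues i ^ k : ℝ) : ℂ) - ((∑ i, hB.eigenvalues i ^ k : ℝ) : ℂ)
      = (A ^ k - B ^ k).trace := by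
    rw [Matrix.trace_sub, trace_pow A hA k, trace_pow B hB k]
  calc |(∑ i, hA.eigenvalues i ^ k) - ∑ i, hB.eigenvalues i ^ k|
      = ‖((∑ i, hA.eigenvalues i ^ k : ℝ) : ℂ) - ((∑ i, hB.eigenvalues i ^ k : ℝ) : ℂ)‖ := by
        rw [← Complex.ofReal_sub, Complex.norm_real, Real.norm_eq_abs]
    _ = ‖(A ^ k - B ^ k).trace‖ := by rw [heq]
    _ ≤ _ := key

/-- Polynomial comparison. -/
lemma sum_eval_eig_sub (A B : Matrix (Fin n) (Fin n) ℂ) (hA : A.IsHermitian) (hB : B.IsHermitian)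
    {M : ℝ} (hMA : ‖A‖ ≤ M) (hMB : ‖B‖ ≤ M) (hM : 0 ≤ M) (p : Polynomial ℝ) :
    |(∑ i, p.eval (hA.eigenvalues i)) - ∑ i, p.eval (hB.eigenvalues i)|
      ≤ (∑ k ∈ Finset.range (p.natDegree + 1), |p.coeff k| * ((k : ℝ) * M ^ (k - 1)))
          * traceNorm (A - B) := by
  have expand : ∀ (C : Matrix (Fin n) (Fin n) ℂ) (hCh : C.IsHermitian),
      ∑ i, p.eval (hCh.eigenvalues i)
        = ∑ k ∈ Finset.range (p.natDegree + 1), p.coeff k * ∑ i, hCh.eigenvalues i ^ k := by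
    intro C hCh
    calc ∑ i, p.eval (hCh.eigenvalues i)
        = ∑ i : Fin n, ∑ k ∈ Finset.range (p.natDegree + 1),
            p.coeff k * hCh.eigenvalues i ^ k :=
          Finset.sum_congr rfl fun i _ => Polynomial.eval_eq_sum_range _
      _ = ∑ k ∈ Finset.range (p.natDegree + 1), ∑ i : Fin n,
            p.coeff k * hCh.eigenvalues i ^ k := Finset.sum_comm
      _ = _ := by simp [Finset.mul_sum]
  rw [expand A hA, expand B hB, ← Finset.sum_sub_distrib]
  calc |∑ k ∈ Finset.range (p.natDegree + 1),
          (p.coeff k * ∑ i, hA.eigenvalues i ^ k - p.coeff k * ∑ i, hB.eigenvalues i ^ k)|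
      ≤ ∑ k ∈ Finset.range (p.natDegree + 1),
          |p.coeff k * ∑ i, hA.eigenvalues i ^ k - p.coeff k * ∑ i, hB.eigenvalues i ^ k| :=
        Finset.abs_sum_le_sum_abs _ _
    _ ≤ ∑ k ∈ Finset.range (p.natDegree + 1),
          |p.coeff k| * ((k : ℝ) * M ^ (k - 1)) * traceNorm (A - B) := by
        refine Finset.sum_le_sum fun k _ => ?_
        rw [← mul_sub, abs_mul, mul_assoc]
        exact mul_le_mul_of_nonneg_left (sum_pow_eig_sub A B hA hB hMA hMB hM k) (abs_nonneg _)
    _ = _ := by rw [← Finset.sum_mul]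

end Aux

/-- If `{Aₙ}` and `{Bₙ}` are Hermitian with `‖Aₙ‖_∞ ≤ M`, `‖Bₙ‖_∞ ≤ M` and
`‖Aₙ - Bₙ‖_tr = o(n)`, then for every continuous `φ : ℝ → ℝ`,
`∑_k φ(λ_k(Aₙ)) - ∑_k φ(λ_k(Bₙ)) = o(n)`, where the (real) eigenvalues are counted with
multiplicity. -/
theorem trace_comparison_hermitian (M : ℝ) (hM : 0 < M)
    (A B : ∀ n : ℕ, Matrix (Fin n) (Fin n) ℂ)
    (hAh : ∀ n, (A n).IsHermitian) (hBh : ∀ n, (B n).IsHermitian)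
    (hA : ∀ n, specNorm (A n) ≤ M) (hB : ∀ n, specNorm (B n) ≤ M)
    (htr : (fun n : ℕ => traceNorm (A n - B n)) =o[atTop] (fun n : ℕ => (n : ℝ)))
    (φ : ℝ → ℝ) (hφ : Continuous φ) :
    (fun n : ℕ => (∑ i : Fin n, φ ((hAh n).eigenvalues i)) -
        ∑ i : Fin n, φ ((hBh n).eigenvalues i))
      =o[atTop] (fun n : ℕ => (n : ℝ)) := by
  rw [isLittleO_iff]
  intro c hc
  obtain ⟨p, hp⟩ := exists_polynomial_near_of_continuousOn (-M) M φ hφ.continuousOn (c / 3)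
    (by positivity)
  set K : ℝ := ∑ k ∈ Finset.range (p.natDegree + 1), |p.coeff k| * ((k : ℝ) * M ^ (k - 1))
    with hKdef
  have hK : 0 ≤ K :=
    Finset.sum_nonneg fun k _ => mul_nonneg (abs_nonneg _)
      (mul_nonneg (Nat.cast_nonneg _) (pow_nonneg hM.le _))
  have hc' : (0 : ℝ) < c / (3 * (K + 1)) := by positivity
  filter_upwards [isLittleO_iff.mp htr hc'] with n hn
  have hMA : ‖A n‖ ≤ M := by rw [← specNorm_eq_l2]; exact hA n
  have hMB : ‖B n‖ ≤ M := by rw [← specNorm_eq_l2]; exact hB n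
  have heigA : ∀ i : Fin n, (hAh n).eigenvalues i ∈ Set.Icc (-M) M := fun i => by
    have := (eig_abs_le (A n) (hAh n) i).trans hMA
    constructor <;> [linarith [abs_le.mp this |>.1]; exact (abs_le.mp this).2]
  have heigB : ∀ i : Fin n, (hBh n).eigenvalues i ∈ Set.Icc (-M) M := fun i => by
    have := (eig_abs_le (B n) (hBh n) i).trans hMB
    constructor <;> [linarith [abs_le.mp this |>.1]; exact (abs_le.mp this).2]
  have e1 : |(∑ i : Fin n, φ ((hAh n).eigenvalues i)) - ∑ i : Fin n, p.eval ((hAh n).eigenvalues i)|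
      ≤ (n : ℝ) * (c / 3) := by
    rw [← Finset.sum_sub_distrib]
    calc |∑ i : Fin n, (φ ((hAh n).eigenvalues i) - p.eval ((hAh n).eigenvalues i))|
        ≤ ∑ i : Fin n, |φ ((hAh n).eigenvalues i) - p.eval ((hAh n).eigenvalues i)| :=
          Finset.abs_sum_le_sum_abs _ _
      _ ≤ ∑ _i : Fin n, (c / 3) := Finset.sum_le_sum fun i _ => by
          rw [abs_sub_comm]
          exact (hp _ (heigA i)).le
      _ = (n : ℝ) * (c / 3) := by simp [mul_comm]
  have e2 : |(∑ i : Fin n, φ ((hBh n).eigenvalues i)) - ∑ i : Fin n, p.eval ((hBh n).eigenvalues i)|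
      ≤ (n : ℝ) * (c / 3) := by
    rw [← Finset.sum_sub_distrib]
    calc |∑ i : Fin n, (φ ((hBh n).eigenvalues i) - p.eval ((hBh n).eigenvalues i))|
        ≤ ∑ i : Fin n, |φ ((hBh n).eigenvalues i) - p.eval ((hBh n).eigenvalues i)| :=
          Finset.abs_sum_le_sum_abs _ _
      _ ≤ ∑ _i : Fin n, (c / 3) := Finset.sum_le_sum fun i _ => by
          rw [abs_sub_comm]
          exact (hp _ (heigB i)).le
      _ = (n : ℝ) * (c / 3) := by simp [mul_comm]
  have e3 : |(∑ i : Fin n, p.eval ((hAh n).eigenvalues i))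
        - ∑ i : Fin n, p.eval ((hBh n).eigenvalues i)|
      ≤ (n : ℝ) * (c / 3) := by
    have h0 := sum_eval_eig_sub (A n) (B n) (hAh n) (hBh n) hMA hMB hM.le p
    have htn : traceNorm (A n - B n) ≤ c / (3 * (K + 1)) * (n : ℝ) := by
      have := hn
      rw [Real.norm_eq_abs, Real.norm_eq_abs, abs_of_nonneg (traceNorm_nonneg' _),
        abs_of_nonneg (Nat.cast_nonneg n)] at this
      exact this
    have h1 : K * traceNorm (A n - B n) ≤ K * (c / (3 * (K + 1)) * (n : ℝ)) :=
      mul_le_mul_of_nonneg_left htn hK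
    have h2 : K * (c / (3 * (K + 1)) * (n : ℝ)) ≤ (n : ℝ) * (c / 3) := by
      rw [div_mul_eq_mul_div, mul_div_assoc', div_le_iff₀ (by positivity)]
      have hn0 : (0 : ℝ) ≤ (n : ℝ) := Nat.cast_nonneg n
      nlinarith
    exact h0.trans (h1.trans h2)
  rw [Real.norm_eq_abs, Real.norm_eq_abs, Nat.abs_cast]
  calc |(∑ i : Fin n, φ ((hAh n).eigenvalues i)) - ∑ i : Fin n, φ ((hBh n).eigenvalues i)|
      = |((∑ i : Fin n, φ ((hAh n).eigenvalues i)) - ∑ i : Fin n, p.eval ((hAh n).eigenvalues i))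
          + ((∑ i : Fin n, p.eval ((hAh n).eigenvalues i))
              - ∑ i : Fin n, p.eval ((hBh n).eigenvalues i))
          + ((∑ i : Fin n, p.eval ((hBh n).eigenvalues i))
              - ∑ i : Fin n, φ ((hBh n).eigenvalues i))| := by ring_nf
    _ ≤ (n : ℝ) * (c / 3) + (n : ℝ) * (c / 3) + (n : ℝ) * (c / 3) := by
        have := abs_add_three
          ((∑ i : Fin n, φ ((hAh n).eigenvalues i)) - ∑ i : Fin n, p.eval ((hAh n).eigenvalues i))
          ((∑ i : Fin n, p.eval ((hAh n).eigenvalues i))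
              - ∑ i : Fin n, p.eval ((hBh n).eigenvalues i))
          ((∑ i : Fin n, p.eval ((hBh n).eigenvalues i))
              - ∑ i : Fin n, φ ((hBh n).eigenvalues i))
        refine this.trans ?_
        have e2' : |(∑ i : Fin n, p.eval ((hBh n).eigenvalues i))
            - ∑ i : Fin n, φ ((hBh n).eigenvalues i)| ≤ (n : ℝ) * (c / 3) := by
          rw [abs_sub_comm]; exact e2
        linarith
    _ = c * (n : ℝ) := by ring
end
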